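/- arXiv:2408.00173 — 4 statements merged into one kernel-verified Lean document; each statement's English description precedes it below -/
import Mathlib

section
/- Let f be a polymatroid function on E, s ∈ ℝ^E_{>0}, m ∈ ℝ^E_{≥0}, and α = min{h > 0 : s ∈ h·P_f}. For h ≥ α let A_h = {z ∈ ℝ^E_{≥0} : s + z ∈ h·B_f}, and let z*_h minimize m·z over A_h. Then m·z*_h ≥ m·z*_α for every h ≥ α. In particular, the polymatroid reinforcement problem min{m·z : z ≥ 0, s+z ∈ h·B_f for some h > 0} is attained on A_α. -/
open Finset
open scoped Pointwise

lemma exists_reduce {E : Type*} [Fintype E] [DecidableEq E]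
    (f : Finset E → ℝ) (hf0 : f ∅ = 0)
    (hfmono : ∀ A B : Finset E, A ⊆ B → f A ≤ f B)
    (hfsub : ∀ A B : Finset E, f (A ∩ B) + f (A ∪ B) ≤ f A + f B)
    (α h : ℝ) (hα0 : 0 < α) (hαh : α ≤ h)
    (s z : E → ℝ) (hz : ∀ e, 0 ≤ z e)
    (hs : ∀ A : Finset E, ∑ e ∈ A, s e ≤ α * f A)
    (hsz : ∀ A : Finset E, ∑ e ∈ A, (s e + z e) ≤ h * f A)
    (hszE : ∑ e : E, (s e + z e) = h * f Finset.univ) :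
    ∃ x : E → ℝ, (∀ e, s e ≤ x e) ∧ (∀ e, x e ≤ s e + z e) ∧
      (∀ A : Finset E, ∑ e ∈ A, x e ≤ α * f A) ∧ ∑ e : E, x e = α * f Finset.univ := by
  classical
  set Q : Set (E → ℝ) :=
    Set.Icc s (fun e => s e + z e) ∩ {x | ∀ A : Finset E, ∑ e ∈ A, x e ≤ α * f A} with hQ
  have hQne : s ∈ Q := by
    refine ⟨⟨le_refl s, fun e => le_add_of_nonneg_right (hz e)⟩, hs⟩
  have hclosed : IsClosed {x : E → ℝ | ∀ A : Finset E, ∑ e ∈ A, x e ≤ α * f A} := by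
    have : {x : E → ℝ | ∀ A : Finset E, ∑ e ∈ A, x e ≤ α * f A}
        = ⋂ A : Finset E, {x : E → ℝ | ∑ e ∈ A, x e ≤ α * f A} := by
      ext x; simp
    rw [this]
    exact isClosed_iInter fun A =>
      isClosed_le (continuous_finset_sum _ fun e _ => continuous_apply e) continuous_const
  have hQc : IsCompact Q := IsCompact.inter_right isCompact_Icc hclosed
  have hcont : ContinuousOn (fun x : E → ℝ => ∑ e : E, x e) Q :=
    (continuous_finset_sum Finset.univ fun e _ => continuous_apply e).continuousOn
  obtain ⟨x, hxQ, hmax⟩ := hQc.exists_isMaxOn ⟨s, hQne⟩ hcont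
  have hxge : ∀ e, s e ≤ x e := fun e => hxQ.1.1 e
  have hxle : ∀ e, x e ≤ s e + z e := fun e => hxQ.1.2 e
  have hxP : ∀ A : Finset E, ∑ e ∈ A, x e ≤ α * f A := hxQ.2
  have htight : ∀ e, x e < s e + z e → ∃ A : Finset E, e ∈ A ∧ ∑ a ∈ A, x a = α * f A := by
    intro e he
    by_contra hne
    push_neg at hne
    have hslack : ∀ A : Finset E, e ∈ A → ∑ a ∈ A, x a < α * f A := fun A hA =>
      lt_of_le_of_ne (hxP A) (hne A hA)
    set 𝒜 : Finset (Finset E) := Finset.univ.filter (fun A => e ∈ A) with h𝒜def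
    have h𝒜 : 𝒜.Nonempty := ⟨Finset.univ, by simp [h𝒜def]⟩
    set ε₂ := 𝒜.inf' h𝒜 (fun A => α * f A - ∑ a ∈ A, x a) with hε₂def
    have hε₂ : 0 < ε₂ := by
      rw [hε₂def, Finset.lt_inf'_iff]
      intro A hA
      have : e ∈ A := by simpa [h𝒜def] using hA
      linarith [hslack A this]
    set ε := min (s e + z e - x e) ε₂ with hεdef
    have hε : 0 < ε := lt_min (by linarith) hε₂
    set x' : E → ℝ := fun a => x a + if a = e then ε else 0 with hx'def
    have hsum : ∀ A : Finset E, ∑ a ∈ A, x' a = ∑ a ∈ A, x a + if e ∈ A then ε else 0 := by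
      intro A
      rw [hx'def]
      rw [Finset.sum_add_distrib, Finset.sum_ite_eq' A e (fun _ => ε)]
    have hx'Q : x' ∈ Q := by
      refine ⟨⟨fun a => ?_, fun a => ?_⟩, fun A => ?_⟩
      · simp only [hx'def]
        split_ifs
        · linarith [hxge a]
        · linarith [hxge a]
      · simp only [hx'def]
        split_ifs with hae
        · subst hae
          have h1 : ε ≤ s a + z a - x a := min_le_left _ _
          linarith
        · linarith [hxle a]
      · rw [hsum]
        split_ifs with hAe
        · have h1 : ε ≤ α * f A - ∑ a ∈ A, x a :=
            le_trans (min_le_right _ _) (Finset.inf'_le _ (by simp [h𝒜def, hAe]))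
          linarith
        · simpa using hxP A
    have hcontr := hmax hx'Q
    simp only [Set.mem_setOf_eq] at hcontr
    rw [hsum Finset.univ, if_pos (Finset.mem_univ e)] at hcontr
    linarith
  have hFex : ∀ e : E, ∃ A : Finset E, (x e < s e + z e → e ∈ A) ∧ ∑ a ∈ A, x a = α * f A := by
    intro e
    by_cases hlt : x e < s e + z e
    · obtain ⟨A, h1, h2⟩ := htight e hlt
      exact ⟨A, fun _ => h1, h2⟩
    · exact ⟨∅, fun hc => absurd hc hlt, by simp [hf0]⟩
  choose F hF1 hF2 using hFex
  set T : Finset E := Finset.univ.biUnion F with hTdef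
  have hunion : ∀ A B : Finset E, ∑ a ∈ A, x a = α * f A → ∑ a ∈ B, x a = α * f B →
      ∑ a ∈ A ∪ B, x a = α * f (A ∪ B) := by
    intro A B hA hB
    have h3 : α * f (A ∩ B) + α * f (A ∪ B) ≤ α * f A + α * f B := by
      nlinarith [hfsub A B, hα0.le]
    have hui : ∑ a ∈ A ∪ B, x a + ∑ a ∈ A ∩ B, x a = ∑ a ∈ A, x a + ∑ a ∈ B, x a :=
      Finset.sum_union_inter
    have h1 := hxP (A ∪ B)
    have h2 := hxP (A ∩ B)
    linarith
  have hTt : ∀ S : Finset E, ∑ a ∈ S.biUnion F, x a = α * f (S.biUnion F) := by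
    intro S
    induction S using Finset.induction_on with
    | empty => simp [hf0]
    | insert _ _ hnot ih =>
        rw [Finset.biUnion_insert]
        exact hunion _ _ (hF2 _) ih
  have hTc : ∀ e, e ∉ T → x e = s e + z e := by
    intro e heT
    by_contra hne
    have hlt : x e < s e + z e := lt_of_le_of_ne (hxle e) hne
    exact heT (Finset.mem_biUnion.mpr ⟨e, Finset.mem_univ e, hF1 e hlt⟩)
  have hsplit : ∑ a ∈ T, x a + ∑ a ∈ Tᶜ, x a = ∑ a, x a := Finset.sum_add_sum_compl T x
  have hTtight : ∑ a ∈ T, x a = α * f T := hTt Finset.univ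
  have hcomp : ∑ a ∈ Tᶜ, x a = ∑ a ∈ Tᶜ, (s a + z a) :=
    Finset.sum_congr rfl fun a ha => hTc a (Finset.mem_compl.mp ha)
  have hsz2 : ∑ a ∈ T, (s a + z a) + ∑ a ∈ Tᶜ, (s a + z a) = h * f Finset.univ := by
    rw [Finset.sum_add_sum_compl]
    exact hszE
  have hT1 : ∑ a ∈ T, (s a + z a) ≤ h * f T := hsz T
  have hfT : f T ≤ f Finset.univ := hfmono T Finset.univ (Finset.subset_univ T)
  have hkey : 0 ≤ (h - α) * (f Finset.univ - f T) :=
    mul_nonneg (by linarith) (by linarith)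
  have hge : α * f Finset.univ ≤ ∑ a, x a := by nlinarith
  exact ⟨x, hxge, hxle, hxP, le_antisymm (hxP Finset.univ) hge⟩

/-- For `h ≥ α`, any minimizer `z*_h` of `m·z` over
`A_h = {z ≥ 0 : s + z ∈ h·B_f}` satisfies `m·z*_h ≥ m·z*_α`; in particular, the
polymatroid reinforcement problem `min{m·z : z ≥ 0, s + z ∈ h·B_f for some h > 0}`
is attained on `A_α`, where `α = min{h > 0 : s ∈ h·P_f}`. -/
theorem stmt4 {E : Type*} [Fintype E] [DecidableEq E]
    (f : Finset E → ℝ)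
    (hf0 : f ∅ = 0)
    (hfmono : ∀ A B : Finset E, A ⊆ B → f A ≤ f B)
    (hfsub : ∀ A B : Finset E, f (A ∩ B) + f (A ∪ B) ≤ f A + f B)
    (Pf : Set (E → ℝ))
    (hPf : Pf = {x | (∀ e, 0 ≤ x e) ∧ ∀ A : Finset E, ∑ e ∈ A, x e ≤ f A})
    (Bf : Set (E → ℝ))
    (hBf : Bf = {x | x ∈ Pf ∧ ∑ e : E, x e = f Finset.univ})
    (s : E → ℝ) (hspos : ∀ e, 0 < s e)
    (m : E → ℝ) (hm : ∀ e, 0 ≤ m e)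
    (α : ℝ)
    (hα : IsLeast {h : ℝ | 0 < h ∧ s ∈ h • Pf} α)
    (A : ℝ → Set (E → ℝ))
    (hA : ∀ h : ℝ, A h = {z : E → ℝ | (∀ e, 0 ≤ z e) ∧ s + z ∈ h • Bf})
    (zα : E → ℝ)
    (hzα : zα ∈ A α ∧ ∀ z ∈ A α, ∑ e : E, m e * zα e ≤ ∑ e : E, m e * z e) :
    (∀ h : ℝ, α ≤ h → ∀ zh : E → ℝ,
        (zh ∈ A h ∧ ∀ z ∈ A h, ∑ e : E, m e * zh e ≤ ∑ e : E, m e * z e) →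
        ∑ e : E, m e * zα e ≤ ∑ e : E, m e * zh e) ∧
    (∀ z : E → ℝ, (∃ h : ℝ, 0 < h ∧ z ∈ A h) →
        ∑ e : E, m e * zα e ≤ ∑ e : E, m e * z e) := by
  have hα0 : 0 < α := hα.1.1
  have hsPα : ∀ B : Finset E, ∑ e ∈ B, s e ≤ α * f B := by
    obtain ⟨y, hy, hys⟩ := Set.mem_smul_set.mp hα.1.2
    rw [hPf] at hy
    intro B
    have : ∑ e ∈ B, s e = α * ∑ e ∈ B, y e := by
      rw [← hys, Finset.mul_sum]
      exact Finset.sum_congr rfl fun e _ => by simp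
    rw [this]
    exact mul_le_mul_of_nonneg_left (hy.2 B) hα0.le
  have part2 : ∀ z : E → ℝ, (∃ h : ℝ, 0 < h ∧ z ∈ A h) →
      ∑ e : E, m e * zα e ≤ ∑ e : E, m e * z e := by
    rintro z ⟨h, hh0, hzA⟩
    rw [hA] at hzA
    obtain ⟨hz0, hszB⟩ := hzA
    obtain ⟨y, hyB, hys⟩ := Set.mem_smul_set.mp hszB
    rw [hBf] at hyB
    obtain ⟨hyP, hyE⟩ := hyB
    rw [hPf] at hyP
    have happ : ∀ e, s e + z e = h * y e := by
      intro e
      have := congrFun hys e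
      simpa using this.symm
    have hsz : ∀ B : Finset E, ∑ e ∈ B, (s e + z e) ≤ h * f B := by
      intro B
      have h1 : ∑ e ∈ B, (s e + z e) = h * ∑ e ∈ B, y e := by
        rw [Finset.mul_sum]
        exact Finset.sum_congr rfl fun e _ => happ e
      rw [h1]
      exact mul_le_mul_of_nonneg_left (hyP.2 B) hh0.le
    have hszE : ∑ e : E, (s e + z e) = h * f Finset.univ := by
      have h1 : ∑ e : E, (s e + z e) = h * ∑ e : E, y e := by
        rw [Finset.mul_sum]
        exact Finset.sum_congr rfl fun e _ => happ e
      rw [h1, hyE]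
    have hαh : α ≤ h := by
      apply hα.2
      refine ⟨hh0, ?_⟩
      rw [hPf]
      refine Set.mem_smul_set.mpr ⟨fun e => h⁻¹ * s e, ⟨fun e => ?_, fun B => ?_⟩, ?_⟩
      · exact mul_nonneg (inv_nonneg.mpr hh0.le) (hspos e).le
      · have h1 : ∑ e ∈ B, h⁻¹ * s e = h⁻¹ * ∑ e ∈ B, s e := by rw [Finset.mul_sum]
        have h2 : ∑ e ∈ B, s e ≤ h * f B := by
          refine le_trans ?_ (hsz B)
          exact Finset.sum_le_sum fun e _ => le_add_of_nonneg_right (hz0 e)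
        rw [h1]
        calc h⁻¹ * ∑ e ∈ B, s e ≤ h⁻¹ * (h * f B) :=
              mul_le_mul_of_nonneg_left h2 (inv_nonneg.mpr hh0.le)
          _ = f B := by field_simp
      · funext e
        simp only [Pi.smul_apply, smul_eq_mul]
        field_simp
    obtain ⟨x, hx1, hx2, hx3, hx4⟩ := exists_reduce f hf0 hfmono hfsub α h hα0 hαh s z hz0
      hsPα hsz hszE
    set z' : E → ℝ := fun e => x e - s e with hz'def
    have hz'A : z' ∈ A α := by
      rw [hA]
      refine ⟨fun e => by simp [hz'def]; linarith [hx1 e], ?_⟩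
      have hxs : s + z' = x := by funext e; simp [hz'def]
      rw [hxs]
      refine Set.mem_smul_set.mpr ⟨fun e => α⁻¹ * x e, ?_, ?_⟩
      · rw [hBf, hPf]
        refine ⟨⟨fun e => mul_nonneg (inv_nonneg.mpr hα0.le)
          (le_trans (hspos e).le (hx1 e)), fun B => ?_⟩, ?_⟩
        · have h1 : ∑ e ∈ B, α⁻¹ * x e = α⁻¹ * ∑ e ∈ B, x e := by rw [Finset.mul_sum]
          rw [h1]
          calc α⁻¹ * ∑ e ∈ B, x e ≤ α⁻¹ * (α * f B) :=
                mul_le_mul_of_nonneg_left (hx3 B) (inv_nonneg.mpr hα0.le)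
            _ = f B := by field_simp
        · have h1 : ∑ e : E, α⁻¹ * x e = α⁻¹ * ∑ e : E, x e := by rw [Finset.mul_sum]
          rw [h1, hx4]
          field_simp
      · funext e
        simp only [Pi.smul_apply, smul_eq_mul]
        field_simp
    have hle : ∑ e : E, m e * z' e ≤ ∑ e : E, m e * z e := by
      refine Finset.sum_le_sum fun e _ => ?_
      have : z' e ≤ z e := by
        have := hx2 e
        simp [hz'def]
        linarith
      exact mul_le_mul_of_nonneg_left this (hm e)
    exact le_trans (hzα.2 z' hz'A) hle
  refine ⟨?_, part2⟩
  intro h hαh zh hzh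
  exact part2 zh ⟨h, lt_of_lt_of_le hα0 hαh, hzh.1⟩
end

section
/- Let f be a polymatroid function on E, g(U) = f(E) − f(E∖U), Q_g = {x ∈ ℝ^E : x ≥ 0, x(A) ≥ g(A) ∀A ⊆ E}, and C_g = {x ∈ Q_g : x(E) = g(E)}. Then Q_g = C_g + ℝ^E_{≥0}. -/
open Finset

section auxlemmas
variable {E : Type*} [Fintype E] [DecidableEq E]

private lemma tight_union_aux (g : Finset E → ℝ)
    (hsup : ∀ A B : Finset E, g A + g B ≤ g (A ∪ B) + g (A ∩ B))
    (y : E → ℝ) (hfeas : ∀ A : Finset E, g A ≤ ∑ e ∈ A, y e)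
    {A B : Finset E} (hA : ∑ e ∈ A, y e = g A) (hB : ∑ e ∈ B, y e = g B) :
    ∑ e ∈ A ∪ B, y e = g (A ∪ B) := by
  have hsum : ∑ e ∈ A ∪ B, y e + ∑ e ∈ A ∩ B, y e = ∑ e ∈ A, y e + ∑ e ∈ B, y e :=
    Finset.sum_union_inter
  have h1 := hfeas (A ∪ B)
  have h2 := hfeas (A ∩ B)
  have h3 := hsup A B
  linarith

private lemma reduce_aux (g : Finset E → ℝ) (S : Finset E) :
    ∀ x : E → ℝ, (∀ e, 0 ≤ x e) → (∀ A : Finset E, g A ≤ ∑ e ∈ A, x e) →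
    ∃ y : E → ℝ, (∀ e, 0 ≤ y e) ∧ (∀ A : Finset E, g A ≤ ∑ e ∈ A, y e) ∧
      (∀ e, y e ≤ x e) ∧
      ∀ e ∈ S, y e = 0 ∨ ∃ A : Finset E, e ∈ A ∧ ∑ a ∈ A, y a = g A := by
  induction S using Finset.induction with
  | empty =>
    intro x h1 h2
    exact ⟨x, h1, h2, fun e => le_refl _, by simp⟩
  | @insert e S he ih =>
    intro x hx1 hx2
    obtain ⟨y, hy1, hy2, hyx, hyt⟩ := ih x hx1 hx2
    set F := (Finset.univ : Finset (Finset E)).filter (fun A => e ∈ A) with hF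
    have hFne : F.Nonempty := ⟨{e}, by simp [hF]⟩
    set m := F.sup' hFne (fun A => g A - ∑ a ∈ A.erase e, y a) with hm
    set v := max 0 m with hv
    set y' := Function.update y e v with hy'def
    have hveq : y' e = v := Function.update_self e v y
    have hne : ∀ a, a ≠ e → y' a = y a := fun a ha => Function.update_of_ne ha v y
    have hv0 : 0 ≤ v := le_max_left _ _
    have hvle : v ≤ y e := by
      apply max_le (hy1 e)
      apply Finset.sup'_le
      intro A hA
      have heA : e ∈ A := (Finset.mem_filter.mp hA).2
      have h1 : y e + ∑ a ∈ A.erase e, y a = ∑ a ∈ A, y a :=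
        Finset.add_sum_erase A y heA
      have h2 := hy2 A
      linarith
    have hmle : m ≤ v := le_max_right _ _
    -- pointwise y' ≤ y
    have hy'ley : ∀ a, y' a ≤ y a := by
      intro a
      by_cases ha : a = e
      · subst ha; rw [hveq]; exact hvle
      · rw [hne a ha]
    -- sum of y' over a set containing e
    have hsum_mem : ∀ A : Finset E, e ∈ A →
        ∑ a ∈ A, y' a = v + ∑ a ∈ A.erase e, y a := by
      intro A heA
      have h1 : y' e + ∑ a ∈ A.erase e, y' a = ∑ a ∈ A, y' a :=
        Finset.add_sum_erase A y' heA
      have h2 : ∑ a ∈ A.erase e, y' a = ∑ a ∈ A.erase e, y a := by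
        apply Finset.sum_congr rfl
        intro a ha
        exact hne a (Finset.ne_of_mem_erase ha)
      rw [← h1, h2, hveq]
    have hsum_notMem : ∀ A : Finset E, e ∉ A → ∑ a ∈ A, y' a = ∑ a ∈ A, y a := by
      intro A heA
      apply Finset.sum_congr rfl
      intro a ha
      exact hne a (fun h => heA (h ▸ ha))
    -- nonnegativity
    have hy'1 : ∀ a, 0 ≤ y' a := by
      intro a
      by_cases ha : a = e
      · subst ha; rw [hveq]; exact hv0
      · rw [hne a ha]; exact hy1 a
    -- feasibility
    have hy'2 : ∀ A : Finset E, g A ≤ ∑ a ∈ A, y' a := by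
      intro A
      by_cases heA : e ∈ A
      · rw [hsum_mem A heA]
        have hAF : A ∈ F := by simp [hF, heA]
        have : g A - ∑ a ∈ A.erase e, y a ≤ m :=
          Finset.le_sup' (fun A => g A - ∑ a ∈ A.erase e, y a) hAF
        linarith
      · rw [hsum_notMem A heA]; exact hy2 A
    refine ⟨y', hy'1, hy'2, fun a => le_trans (hy'ley a) (hyx a), ?_⟩
    have hte : y' e = 0 ∨ ∃ A : Finset E, e ∈ A ∧ ∑ a ∈ A, y' a = g A := by
      rcases le_or_gt m 0 with hm0 | hm0
      · left; rw [hveq, hv, max_eq_left hm0]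
      · right
        obtain ⟨A, hAF, hAeq⟩ :=
          Finset.exists_mem_eq_sup' hFne (fun A => g A - ∑ a ∈ A.erase e, y a)
        have heA : e ∈ A := (Finset.mem_filter.mp hAF).2
        refine ⟨A, heA, ?_⟩
        rw [hsum_mem A heA]
        have hvm : v = m := max_eq_right (le_of_lt hm0)
        rw [hvm, hm, hAeq]
        ring
    intro e' he'
    rcases Finset.mem_insert.mp he' with rfl | hS
    · exact hte
    · -- e' ∈ S : previous property preserved
      rcases hyt e' hS with h0 | ⟨A, heA', hAt⟩
      · left
        have hne' : e' ≠ e := fun h => he (h ▸ hS)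
        rw [hne e' hne', h0]
      · right
        refine ⟨A, heA', le_antisymm ?_ (hy'2 A)⟩
        calc ∑ a ∈ A, y' a ≤ ∑ a ∈ A, y a := Finset.sum_le_sum fun a _ => hy'ley a
          _ = g A := hAt

private lemma tight_cover_aux (g : Finset E → ℝ)
    (hsup : ∀ A B : Finset E, g A + g B ≤ g (A ∪ B) + g (A ∩ B))
    (hg0 : g ∅ = 0)
    (y : E → ℝ) (hfeas : ∀ A : Finset E, g A ≤ ∑ e ∈ A, y e)
    (S : Finset E) :
    ∃ T : Finset E, (∑ a ∈ T, y a = g T) ∧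
      ∀ e ∈ S, (∃ A : Finset E, e ∈ A ∧ ∑ a ∈ A, y a = g A) → e ∈ T := by
  induction S using Finset.induction with
  | empty => exact ⟨∅, by simp [hg0], by simp⟩
  | @insert e S he ih =>
    obtain ⟨T, hT1, hT2⟩ := ih
    by_cases h : ∃ A : Finset E, e ∈ A ∧ ∑ a ∈ A, y a = g A
    · obtain ⟨A, hA1, hA2⟩ := h
      refine ⟨A ∪ T, tight_union_aux g hsup y hfeas hA2 hT1, ?_⟩
      intro e' he' hw
      rcases Finset.mem_insert.mp he' with rfl | hS
      · exact Finset.mem_union_left _ hA1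
      · exact Finset.mem_union_right _ (hT2 e' hS hw)
    · refine ⟨T, hT1, ?_⟩
      intro e' he' hw
      rcases Finset.mem_insert.mp he' with rfl | hS
      · exact absurd hw h
      · exact hT2 e' hS hw

end auxlemmas

/-- With `g(U) = f(E) − f(E∖U)`,
`Q_g = {x ≥ 0 : x(A) ≥ g(A) ∀A}` and `C_g = {x ∈ Q_g : x(E) = g(E)}`,
we have `Q_g = C_g + ℝ^E_{≥0}`. -/
theorem stmt8 {E : Type*} [Fintype E] [DecidableEq E]
    (f : Finset E → ℝ)
    (hf0 : f ∅ = 0)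
    (hfmono : ∀ A B : Finset E, A ⊆ B → f A ≤ f B)
    (hfsub : ∀ A B : Finset E, f (A ∩ B) + f (A ∪ B) ≤ f A + f B)
    (g : Finset E → ℝ)
    (hg : g = fun U => f Finset.univ - f (Finset.univ \ U))
    (Qg : Set (E → ℝ))
    (hQg : Qg = {x | (∀ e, 0 ≤ x e) ∧ ∀ A : Finset E, g A ≤ ∑ e ∈ A, x e})
    (Cg : Set (E → ℝ))
    (hCg : Cg = {x | x ∈ Qg ∧ ∑ e : E, x e = g Finset.univ}) :
    Qg = {x | ∃ y ∈ Cg, ∃ r : E → ℝ, (∀ e, 0 ≤ r e) ∧ x = y + r} := by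
  -- properties of g
  have hg0 : g ∅ = 0 := by simp [hg]
  have hgmono : ∀ A B : Finset E, A ⊆ B → g A ≤ g B := by
    intro A B hAB
    simp only [hg]
    have : Finset.univ \ B ⊆ Finset.univ \ A := Finset.sdiff_subset_sdiff le_rfl hAB
    linarith [hfmono _ _ this]
  have hgsup : ∀ A B : Finset E, g A + g B ≤ g (A ∪ B) + g (A ∩ B) := by
    intro A B
    have h1 : (Finset.univ \ A) ∩ (Finset.univ \ B) = Finset.univ \ (A ∪ B) := by
      ext a; simp only [Finset.mem_inter, Finset.mem_sdiff, Finset.mem_union, Finset.mem_univ, true_and]; tauto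
    have h2 : (Finset.univ \ A) ∪ (Finset.univ \ B) = Finset.univ \ (A ∩ B) := by
      ext a; simp only [Finset.mem_inter, Finset.mem_sdiff, Finset.mem_union, Finset.mem_univ, true_and]; tauto
    have h3 := hfsub (Finset.univ \ A) (Finset.univ \ B)
    rw [h1, h2] at h3
    simp only [hg]
    linarith
  ext x
  simp only [Set.mem_setOf_eq]
  constructor
  · -- forward direction
    intro hx
    rw [hQg] at hx
    obtain ⟨hx1, hx2⟩ := hx
    obtain ⟨y, hy1, hy2, hyx, hyt⟩ := reduce_aux g Finset.univ x hx1 hx2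
    obtain ⟨T, hT1, hT2⟩ := tight_cover_aux g hgsup hg0 y hy2 Finset.univ
    have hsumT : ∑ a ∈ T, y a = ∑ a : E, y a := by
      apply Finset.sum_subset (Finset.subset_univ T)
      intro a _ haT
      rcases hyt a (Finset.mem_univ a) with h0 | hw
      · exact h0
      · exact absurd (hT2 a (Finset.mem_univ a) hw) haT
    have hsum_univ : ∑ a : E, y a = g Finset.univ := by
      have h1 : g Finset.univ ≤ ∑ a : E, y a := hy2 Finset.univ
      have h2 : g T ≤ g Finset.univ := hgmono T Finset.univ (Finset.subset_univ T)
      linarith [hsumT.symm.trans hT1]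
    refine ⟨y, ?_, fun e => x e - y e, fun e => by show (0:ℝ) ≤ x e - y e; linarith [hyx e], ?_⟩
    · rw [hCg, hQg]
      exact ⟨⟨hy1, hy2⟩, hsum_univ⟩
    · funext e; simp
  · -- reverse direction
    rintro ⟨y, hy, r, hr, rfl⟩
    rw [hCg, hQg] at hy
    obtain ⟨⟨hy1, hy2⟩, _⟩ := hy
    rw [hQg]
    refine ⟨fun e => add_nonneg (hy1 e) (hr e), fun A => ?_⟩
    have : ∑ e ∈ A, (y + r) e = ∑ e ∈ A, y e + ∑ e ∈ A, r e := by
      simp [Finset.sum_add_distrib]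
    rw [this]
    have : 0 ≤ ∑ e ∈ A, r e := Finset.sum_nonneg fun e _ => hr e
    linarith [hy2 A]
end

section
/- Let f be a polymatroid function on E with g(U) = f(E) − f(E∖U), and let s ∈ ℝ^E_{>0}. Define α = min{h > 0 : s ∈ h·P_f} and β = max{h > 0 : s ∈ h·Q_g}. Then α ≥ β, and for h > 0, s ∈ h·B_f if and only if h = α = β. -/
open Finset
open scoped Pointwise

/-- For `s ∈ ℝ^E_{>0}`, with `α = min{h > 0 : s ∈ h·P_f}` and
`β = max{h > 0 : s ∈ h·Q_g}`, we have `α ≥ β`, and for `h > 0`,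
`s ∈ h·B_f` iff `h = α = β`. -/
theorem stmt11 {E : Type*} [Fintype E] [DecidableEq E]
    (f : Finset E → ℝ)
    (hf0 : f ∅ = 0)
    (hfmono : ∀ A B : Finset E, A ⊆ B → f A ≤ f B)
    (hfsub : ∀ A B : Finset E, f (A ∩ B) + f (A ∪ B) ≤ f A + f B)
    (hfE : 0 < f Finset.univ)
    (g : Finset E → ℝ)
    (hg : g = fun U => f Finset.univ - f (Finset.univ \ U))
    (Pf Bf Qg : Set (E → ℝ))
    (hPf : Pf = {x | (∀ e, 0 ≤ x e) ∧ ∀ A : Finset E, ∑ e ∈ A, x e ≤ f A})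
    (hBf : Bf = {x | x ∈ Pf ∧ ∑ e : E, x e = f Finset.univ})
    (hQg : Qg = {x | (∀ e, 0 ≤ x e) ∧ ∀ A : Finset E, g A ≤ ∑ e ∈ A, x e})
    (s : E → ℝ) (hspos : ∀ e, 0 < s e)
    (α β : ℝ)
    (hα : IsLeast {h : ℝ | 0 < h ∧ s ∈ h • Pf} α)
    (hβ : IsGreatest {h : ℝ | 0 < h ∧ s ∈ h • Qg} β) :
    β ≤ α ∧ ∀ h : ℝ, 0 < h → (s ∈ h • Bf ↔ h = α ∧ h = β) := by
  obtain ⟨⟨hαpos, hsα⟩, hαlb⟩ := hα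
  obtain ⟨⟨hβpos, hsβ⟩, hβub⟩ := hβ
  -- characterizations of membership
  have hPf' : ∀ h : ℝ, 0 < h →
      (s ∈ h • Pf ↔ ∀ A : Finset E, ∑ e ∈ A, s e ≤ h * f A) := by
    intro h hh
    rw [Set.mem_smul_set_iff_inv_smul_mem₀ hh.ne', hPf]
    simp only [Set.mem_setOf_eq, Pi.smul_apply, smul_eq_mul, ← Finset.mul_sum]
    constructor
    · intro ⟨_, h2⟩ A
      have := h2 A
      rwa [inv_mul_le_iff₀ hh] at this
    · intro h1
      refine ⟨fun e => mul_nonneg (inv_nonneg.2 hh.le) (hspos e).le, fun A => ?_⟩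
      rw [inv_mul_le_iff₀ hh]
      exact h1 A
  have hQg' : ∀ h : ℝ, 0 < h →
      (s ∈ h • Qg ↔ ∀ A : Finset E, h * g A ≤ ∑ e ∈ A, s e) := by
    intro h hh
    rw [Set.mem_smul_set_iff_inv_smul_mem₀ hh.ne', hQg]
    simp only [Set.mem_setOf_eq, Pi.smul_apply, smul_eq_mul, ← Finset.mul_sum]
    constructor
    · intro ⟨_, h2⟩ A
      have := h2 A
      rwa [le_inv_mul_iff₀ hh] at this
    · intro h1
      refine ⟨fun e => mul_nonneg (inv_nonneg.2 hh.le) (hspos e).le, fun A => ?_⟩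
      rw [le_inv_mul_iff₀ hh]
      exact h1 A
  have hguniv : g Finset.univ = f Finset.univ := by
    simp [hg, hf0]
  have hsumα : ∑ e : E, s e ≤ α * f Finset.univ := (hPf' α hαpos).1 hsα Finset.univ
  have hsumβ : β * f Finset.univ ≤ ∑ e : E, s e := by
    have := (hQg' β hβpos).1 hsβ Finset.univ
    rwa [hguniv] at this
  have hβα : β ≤ α :=
    le_of_mul_le_mul_right (hsumβ.trans hsumα) hfE
  refine ⟨hβα, fun h hh => ?_⟩
  have hBf' : s ∈ h • Bf ↔ (∀ A : Finset E, ∑ e ∈ A, s e ≤ h * f A) ∧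
      ∑ e : E, s e = h * f Finset.univ := by
    rw [Set.mem_smul_set_iff_inv_smul_mem₀ hh.ne', hBf, Set.mem_setOf_eq,
      ← Set.mem_smul_set_iff_inv_smul_mem₀ hh.ne', hPf' h hh]
    simp only [Pi.smul_apply, smul_eq_mul, ← Finset.mul_sum]
    rw [inv_mul_eq_iff_eq_mul₀ hh.ne']
  constructor
  · intro hs
    obtain ⟨hsP, hsum⟩ := hBf'.1 hs
    have hαh : α ≤ h := hαlb ⟨hh, (hPf' h hh).2 hsP⟩
    have hhβ : h ≤ β := by
      refine hβub ⟨hh, (hQg' h hh).2 fun A => ?_⟩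
      have hsplit : ∑ e ∈ Finset.univ \ A, s e + ∑ e ∈ A, s e = ∑ e : E, s e :=
        Finset.sum_sdiff (Finset.subset_univ A)
      have h2 : ∑ e ∈ Finset.univ \ A, s e ≤ h * f (Finset.univ \ A) :=
        hsP (Finset.univ \ A)
      rw [hg]
      simp only
      nlinarith
    have hhα : h = α := le_antisymm (hhβ.trans hβα) hαh
    exact ⟨hhα, le_antisymm hhβ (hβα.trans hhα.ge)⟩
  · rintro ⟨rfl, hhh⟩
    refine hBf'.2 ⟨(hPf' h hh).1 hsα, le_antisymm hsumα ?_⟩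
    rw [hhh]
    exact hsumβ
end

section
/- In the setting of the fractional-arboricity iteration: let g(b) = min{b(|B|−1) − σ(E_B) : B ⊆ V, |B| ≥ 2}. Suppose g(b_0) < 0 with minimizer B_0, set b_1 = σ(E_{B_0})/(|B_0|−1), and suppose g(b_1) < 0 with minimizer B_1. Then |B_1| < |B_0|. Consequently, the iteration b ↦ σ(E_B)/(|B|−1) with B a minimizer of g(b) terminates in at most |V| steps. -/
open Finset
open scoped Classical

/-- The set of edges with both endpoints in `B`. -/
noncomputable def edgesIn {V E : Type*} [Fintype E] (ends : E → Sym2 V)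
    (B : Finset V) : Finset E :=
  Finset.univ.filter (fun e => ∀ v ∈ ends e, v ∈ B)

/-- In the fractional-arboricity iteration with
`g(b) = min{b(|B|−1) − σ(E_B) : B ⊆ V, |B| ≥ 2}`: if `g(b₀) < 0` with minimizer
`B₀`, `b₁ = σ(E_{B₀})/(|B₀|−1)`, and `g(b₁) < 0` with minimizer `B₁`, then
`|B₁| < |B₀|` (hence the iteration terminates in at most `|V|` steps). -/
theorem stmt17 {V E : Type*} [Fintype V] [Fintype E] [DecidableEq V]
    (ends : E → Sym2 V)
    (σ : E → ℝ) (hσ : ∀ e, 0 < σ e)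
    (b₀ b₁ : ℝ) (B₀ B₁ : Finset V)
    (hB₀card : 2 ≤ B₀.card) (hB₁card : 2 ≤ B₁.card)
    (hB₀min : ∀ B : Finset V, 2 ≤ B.card →
      b₀ * ((B₀.card : ℝ) - 1) - ∑ e ∈ edgesIn ends B₀, σ e ≤
        b₀ * ((B.card : ℝ) - 1) - ∑ e ∈ edgesIn ends B, σ e)
    (hg₀ : b₀ * ((B₀.card : ℝ) - 1) - ∑ e ∈ edgesIn ends B₀, σ e < 0)
    (hb₁ : b₁ = (∑ e ∈ edgesIn ends B₀, σ e) / ((B₀.card : ℝ) - 1))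
    (hB₁min : ∀ B : Finset V, 2 ≤ B.card →
      b₁ * ((B₁.card : ℝ) - 1) - ∑ e ∈ edgesIn ends B₁, σ e ≤
        b₁ * ((B.card : ℝ) - 1) - ∑ e ∈ edgesIn ends B, σ e)
    (hg₁ : b₁ * ((B₁.card : ℝ) - 1) - ∑ e ∈ edgesIn ends B₁, σ e < 0) :
    B₁.card < B₀.card := by
  set s₀ := ∑ e ∈ edgesIn ends B₀, σ e with hs₀
  set s₁ := ∑ e ∈ edgesIn ends B₁, σ e with hs₁
  set n₀ : ℝ := (B₀.card : ℝ) - 1 with hn₀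
  set n₁ : ℝ := (B₁.card : ℝ) - 1 with hn₁
  have hn₀pos : 0 < n₀ := by
    have : (2:ℝ) ≤ (B₀.card : ℝ) := by exact_mod_cast hB₀card
    linarith
  have hb₁n₀ : b₁ * n₀ = s₀ := by
    rw [hb₁]; field_simp
  have hb₀lt : b₀ < b₁ := by
    have : b₀ * n₀ < s₀ := by linarith
    nlinarith
  have h1 : b₀ * n₀ - s₀ ≤ b₀ * n₁ - s₁ := hB₀min B₁ hB₁card
  have h2 : b₁ * n₁ - s₁ < 0 := hg₁
  have key : n₁ < n₀ := by nlinarith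
  have : (B₁.card : ℝ) < (B₀.card : ℝ) := by linarith
  exact_mod_cast this
end
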